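/- Let f, g: ℝⁿ → ℝ ∪ {∞} be proper closed convex, ρ > 0, γ = ρ⁻¹, and z = ρ⁻¹v. Define the Douglas-Rachford envelope F^DR_γ(z) = (2γ)⁻¹(⟨R_{γf}(z), z⟩ - p²_{γf}(z) - p²_{γg}(R_{γf}(z))) and the ADMM envelope F^ADMM_ρ(v) = (2ρ)⁻¹(⟨R_{ρf*}(v), v⟩ - p²_{ρf*}(v) - p²_{ρ(g*∘(-Id))}(R_{ρf*}(v))). Then F^ADMM_ρ(v) = -F^DR_γ(z). -/

import Mathlib

open scoped RealInnerProductSpace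

/-- Fenchel conjugate of an extended-real-valued function. -/
noncomputable def econj {n : ℕ} (g : EuclideanSpace ℝ (Fin n) → EReal)
    (y : EuclideanSpace ℝ (Fin n)) : EReal :=
  ⨆ x, ((⟪y, x⟫ : ℝ) : EReal) - g x

/-- `g` is proper: somewhere finite and never `-∞`. -/
def EProper {n : ℕ} (g : EuclideanSpace ℝ (Fin n) → EReal) : Prop :=
  (∃ x, g x ≠ ⊤) ∧ ∀ x, g x ≠ ⊥

/-- Convexity for extended-real-valued functions. -/
def EConvex {n : ℕ} (g : EuclideanSpace ℝ (Fin n) → EReal) : Prop :=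
  ∀ x y : EuclideanSpace ℝ (Fin n), ∀ a b : ℝ, 0 ≤ a → 0 ≤ b → a + b = 1 →
    g (a • x + b • y) ≤ (a : EReal) * g x + (b : EReal) * g y

/-- `p` is the proximal point `prox_{γ g}(z)`, i.e. it minimizes
`g(·) + ‖· - z‖²/(2γ)`. -/
def IsProx {n : ℕ} (g : EuclideanSpace ℝ (Fin n) → EReal) (γ : ℝ)
    (z p : EuclideanSpace ℝ (Fin n)) : Prop :=
  ∀ y, g p + ((‖p - z‖^2 / (2*γ) : ℝ) : EReal) ≤ g y + ((‖y - z‖^2 / (2*γ) : ℝ) : EReal)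

/-- `r_{γg}(x) = γ g(x) + ½‖x‖²`. -/
noncomputable def rfun {n : ℕ} (g : EuclideanSpace ℝ (Fin n) → EReal) (γ : ℝ)
    (x : EuclideanSpace ℝ (Fin n)) : EReal :=
  (γ : EReal) * g x + ((‖x‖^2 / 2 : ℝ) : EReal)

/-- `p²_{γg}(x) = 2 r*_{γg}(x) - ½‖x‖²`. -/
noncomputable def p2fun {n : ℕ} (g : EuclideanSpace ℝ (Fin n) → EReal) (γ : ℝ)
    (x : EuclideanSpace ℝ (Fin n)) : EReal :=
  (2 : EReal) * econj (rfun g γ) x - ((‖x‖^2 / 2 : ℝ) : EReal)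


-- ## auxiliary lemmas

variable {n : ℕ}

local notation "E" => EuclideanSpace ℝ (Fin n)

lemma lsc_exists_min {f : E → EReal} (hf : LowerSemicontinuous f) {K : Set E}
    (hK : IsCompact K) (hne : K.Nonempty) : ∃ q ∈ K, ∀ y ∈ K, f q ≤ f y := by
  by_contra h
  push_neg at h
  have hcov : K ⊆ ⋃ y : K, {x | f ↑y < f x} := by
    intro x hx
    obtain ⟨y, hyK, hy⟩ := h x hx
    exact Set.mem_iUnion.2 ⟨⟨y, hyK⟩, hy⟩
  obtain ⟨t, ht⟩ := hK.elim_finite_subcover (fun y : K => {x | f ↑y < f x})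
    (fun y => hf.isOpen_preimage _) hcov
  obtain ⟨x, hx⟩ := hne
  have hxt := ht hx
  obtain ⟨i, hi⟩ := Set.mem_iUnion₂.1 hxt
  obtain ⟨y₀, hy₀t, hy₀min⟩ := t.exists_min_image (fun y => f ↑y) ⟨i, hi.1⟩
  have := ht y₀.2
  obtain ⟨j, hjt, hj⟩ := Set.mem_iUnion₂.1 this
  exact absurd (hy₀min j hjt) (not_le.2 hj)

lemma prox_val_real {g : E → EReal} (hp : EProper g) {γ : ℝ} {z p : E}
    (h : IsProx g γ z p) : ∃ c : ℝ, g p = (c : EReal) := by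
  rcases eq_or_ne (g p) ⊤ with ht | ht
  · exfalso
    obtain ⟨x, hx⟩ := hp.1
    have hle := h x
    rw [ht, EReal.top_add_coe] at hle
    have hgx : g x = (((g x).toReal : ℝ) : EReal) := (EReal.coe_toReal hx (hp.2 x)).symm
    rw [hgx, ← EReal.coe_add, top_le_iff] at hle
    exact EReal.coe_ne_top _ hle
  · exact ⟨(g p).toReal, (EReal.coe_toReal ht (hp.2 p)).symm⟩

private lemma div_scale {γ c d A B : ℝ} (hγ : 0 < γ) (h : c + A/(2*γ) ≤ d + B/(2*γ)) :
    γ*c + A/2 ≤ γ*d + B/2 := by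
  have h' := mul_le_mul_of_nonneg_left h hγ.le
  have hne : γ ≠ 0 := hγ.ne'
  rw [mul_add, mul_add, mul_div_assoc', mul_div_assoc', mul_comm (2:ℝ) γ,
    mul_div_mul_left _ _ hne] at h'
  rw [mul_div_mul_left _ _ hne] at h'
  linarith [h']

lemma econj_rfun_eval {g : E → EReal} (hbot : ∀ x, g x ≠ ⊥) {γ : ℝ} (hγ : 0 < γ)
    {z p : E} {c : ℝ} (hc : g p = (c : EReal)) (h : IsProx g γ z p) :
    econj (rfun g γ) z = ((⟪z, p⟫ - (γ * c + ‖p‖^2/2) : ℝ) : EReal) := by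
  unfold econj
  apply le_antisymm
  · apply iSup_le
    intro u
    rcases eq_or_ne (g u) ⊤ with ht | ht
    · rw [rfun, ht, EReal.coe_mul_top_of_pos (by exact_mod_cast hγ), EReal.top_add_coe,
        EReal.sub_top]
      exact bot_le
    · set d := (g u).toReal with hdd
      have hd : g u = (d : EReal) := (EReal.coe_toReal ht (hbot u)).symm
      rw [rfun, hd, ← EReal.coe_mul, ← EReal.coe_add, ← EReal.coe_sub, EReal.coe_le_coe_iff]
      have key := h u
      rw [hc, hd, ← EReal.coe_add, ← EReal.coe_add, EReal.coe_le_coe_iff] at key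
      have key2 := div_scale hγ key
      have e1 : ‖p - z‖^2 = ‖p‖^2 - 2*⟪p,z⟫ + ‖z‖^2 := norm_sub_sq_real p z
      have e2 : ‖u - z‖^2 = ‖u‖^2 - 2*⟪u,z⟫ + ‖z‖^2 := norm_sub_sq_real u z
      have c1 : ⟪p,z⟫ = ⟪z,p⟫ := real_inner_comm z p
      have c2 : ⟪u,z⟫ = ⟪z,u⟫ := real_inner_comm z u
      nlinarith [key2]
  · have hrp : rfun g γ p = ((γ*c + ‖p‖^2/2 : ℝ) : EReal) := by
      rw [rfun, hc, ← EReal.coe_mul, ← EReal.coe_add]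
    have : ((⟪z, p⟫ - (γ * c + ‖p‖^2/2) : ℝ) : EReal)
        = ((⟪z,p⟫ : ℝ) : EReal) - rfun g γ p := by
      rw [hrp, ← EReal.coe_sub]
    rw [this]
    exact le_iSup (fun u => ((⟪z,u⟫ : ℝ) : EReal) - rfun g γ u) p

lemma prox_subgrad {g : E → EReal} (hconv : EConvex g) (hbot : ∀ x, g x ≠ ⊥)
    {γ : ℝ} (hγ : 0 < γ) {z p : E} {c : ℝ} (hc : g p = (c : EReal)) (h : IsProx g γ z p) :
    ∀ y : E, ((c + γ⁻¹ * ⟪z - p, y - p⟫ : ℝ) : EReal) ≤ g y := by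
  intro y
  rcases eq_or_ne (g y) ⊤ with ht | ht
  · rw [ht]; exact le_top
  have hd : g y = (((g y).toReal : ℝ) : EReal) := (EReal.coe_toReal ht (hbot y)).symm
  set d := (g y).toReal with hdd
  rw [hd, EReal.coe_le_coe_iff]
  have key : ∀ t : ℝ, 0 < t → t ≤ 1 →
      0 ≤ (d - c) - γ⁻¹ * ⟪z - p, y - p⟫ + t * (‖y - p‖^2/(2*γ)) := by
    intro t ht0 ht1
    have hcv := hconv p y (1-t) t (by linarith) ht0.le (by ring)
    have hpt : (1-t) • p + t • y = p + t • (y - p) := by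
      rw [smul_sub, sub_smul, one_smul]
      abel
    rw [hpt, hc, hd] at hcv
    rw [← EReal.coe_mul, ← EReal.coe_mul, ← EReal.coe_add] at hcv
    have h2 := h (p + t • (y - p))
    have h3 : g (p + t • (y - p)) + ((‖p + t • (y - p) - z‖^2/(2*γ) : ℝ) : EReal)
        ≤ (((1-t)*c + t*d : ℝ) : EReal) + ((‖p + t • (y - p) - z‖^2/(2*γ) : ℝ) : EReal) :=
      add_le_add_left hcv _
    have h4 := le_trans h2 h3
    rw [hc, ← EReal.coe_add, ← EReal.coe_add, EReal.coe_le_coe_iff] at h4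
    -- h4 : c + ‖p-z‖²/(2γ) ≤ (1-t)c + td + ‖p + t(y-p) - z‖²/(2γ)
    have e : ‖p + t • (y - p) - z‖^2
        = ‖p - z‖^2 + 2*(t*⟪p - z, y - p⟫) + t^2*‖y - p‖^2 := by
      have : p + t • (y - p) - z = (p - z) + t • (y - p) := by abel
      rw [this, norm_add_sq_real, real_inner_smul_right, norm_smul]
      simp [mul_pow, sq_abs]
    rw [e] at h4
    have hip : ⟪p - z, y - p⟫ = -⟪z - p, y - p⟫ := by
      rw [← inner_neg_left, neg_sub]
    rw [hip] at h4
    -- divide by t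
    by_contra hcc
    push_neg at hcc
    have hγ' : γ ≠ 0 := hγ.ne'
    have hprod : 0 < t * (-((d - c) - γ⁻¹ * ⟪z - p, y - p⟫ + t * (‖y - p‖^2/(2*γ)))) :=
      mul_pos ht0 (by linarith)
    have hiden : t * (-((d - c) - γ⁻¹ * ⟪z - p, y - p⟫ + t * (‖y - p‖^2/(2*γ))))
        = (c + ‖p - z‖^2/(2*γ))
          - ((1-t)*c + t*d + (‖p - z‖^2 + 2*(t*(-⟪z - p, y - p⟫)) + t^2*‖y - p‖^2)/(2*γ)) := by
      field_simp
      ring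
    rw [hiden] at hprod
    linarith
  -- limit t → 0
  by_contra hcon
  push_neg at hcon
  set K := ‖y - p‖^2/(2*γ) with hKdef
  have hK0 : 0 ≤ K := by positivity
  set δ := c + γ⁻¹ * ⟪z - p, y - p⟫ - d with hδdef
  have hδ0 : 0 < δ := by rw [hδdef]; linarith
  set t := min 1 (δ/(K+1)) with htdef
  have ht0 : 0 < t := lt_min one_pos (div_pos hδ0 (by linarith))
  have ht1 : t ≤ 1 := min_le_left _ _
  have hkey := key t ht0 ht1
  have hδeq : d - c - γ⁻¹ * ⟪z - p, y - p⟫ = -δ := by rw [hδdef]; ring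
  have h1 : t ≤ δ/(K+1) := min_le_right _ _
  have h2 : t * K ≤ (δ/(K+1)) * K := mul_le_mul_of_nonneg_right h1 hK0
  have h3 : (δ/(K+1)) * K < δ := by
    rw [div_mul_eq_mul_div, div_lt_iff₀ (by linarith)]
    nlinarith
  linarith

lemma econj_lower {g : E → EReal} {q : E} {c : ℝ} (hc : g q = (c : EReal)) (μ : E) :
    ((⟪μ, q⟫ - c : ℝ) : EReal) ≤ econj g μ := by
  have : ((⟪μ, q⟫ - c : ℝ) : EReal) = ((⟪μ, q⟫ : ℝ) : EReal) - g q := by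
    rw [hc, ← EReal.coe_sub]
  rw [this]
  exact le_iSup (fun u => ((⟪μ, u⟫ : ℝ) : EReal) - g u) q

lemma econj_at_subgrad {g : E → EReal} (hconv : EConvex g) (hp : EProper g) {γ : ℝ}
    (hγ : 0 < γ) {x q : E} {c : ℝ} (hc : g q = (c : EReal)) (h : IsProx g γ x q) :
    econj g (γ⁻¹ • (x - q)) = ((⟪γ⁻¹ • (x - q), q⟫ - c : ℝ) : EReal) := by
  have hsub := prox_subgrad hconv hp.2 hγ hc h
  refine le_antisymm (iSup_le fun y => ?_) (econj_lower hc _)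
  rcases eq_or_ne (g y) ⊤ with htp | htp
  · rw [htp, EReal.sub_top]
    exact bot_le
  · have hdy : g y = (((g y).toReal : ℝ) : EReal) := (EReal.coe_toReal htp (hp.2 y)).symm
    set dy := (g y).toReal
    rw [hdy, ← EReal.coe_sub, EReal.coe_le_coe_iff]
    have hy := hsub y
    rw [hdy, EReal.coe_le_coe_iff] at hy
    have hi : (⟪γ⁻¹ • (x - q), y⟫ : ℝ) - ⟪γ⁻¹ • (x - q), q⟫ = γ⁻¹ * ⟪x - q, y - q⟫ := by
      rw [real_inner_smul_left, real_inner_smul_left, inner_sub_right]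
      ring
    linarith

lemma isProx_econj {g : E → EReal} (hconv : EConvex g) (hp : EProper g) {γ : ℝ}
    (hγ : 0 < γ) {x q : E} {c : ℝ} (hc : g q = (c : EReal)) (h : IsProx g γ x q) :
    IsProx (econj g) γ⁻¹ (γ⁻¹ • x) (γ⁻¹ • (x - q)) := by
  intro μ
  have hρ : 0 < γ⁻¹ := inv_pos.2 hγ
  have hν : econj g (γ⁻¹ • (x - q)) = ((⟪γ⁻¹ • (x - q), q⟫ - c : ℝ) : EReal) :=
    econj_at_subgrad hconv hp hγ hc h
  have hlow : ((⟪μ, q⟫ - c : ℝ) : EReal) ≤ econj g μ := econj_lower hc μ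
  set ρ := γ⁻¹ with hρdef
  set V := ρ • x with hV
  set ν := ρ • (x - q) with hνdef
  have hνV : ν = V - ρ • q := by rw [hνdef, hV, smul_sub]
  -- real inequality
  have e1 : ‖ν - V‖^2 = ρ^2 * ‖q‖^2 := by
    rw [hνV]
    have : V - ρ • q - V = -(ρ • q) := by abel
    rw [this, norm_neg, norm_smul]
    simp [mul_pow, sq_abs]
  have e3 : (⟪μ - ν, q⟫ : ℝ) = ⟪μ, q⟫ - ⟪ν, q⟫ := inner_sub_left μ ν q
  have e2 : ‖μ - V‖^2 = ‖μ - ν‖^2 - 2*(ρ*⟪μ - ν, q⟫) + ρ^2*‖q‖^2 := by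
    have hμV : μ - V = (μ - ν) - ρ • q := by rw [hνV]; abel
    rw [hμV, norm_sub_sq_real, real_inner_smul_right, norm_smul]
    simp [mul_pow, sq_abs]
  have hreal : ⟪ν, q⟫ - c + ‖ν - V‖^2/(2*ρ) ≤ ⟪μ, q⟫ - c + ‖μ - V‖^2/(2*ρ) := by
    have expand : (⟪μ, q⟫ - c + ‖μ - V‖^2/(2*ρ)) - (⟪ν, q⟫ - c + ‖ν - V‖^2/(2*ρ))
        = ‖μ - ν‖^2/(2*ρ) := by
      rw [e1, e2, e3]
      field_simp
      ring
    have hnn : 0 ≤ ‖μ - ν‖^2/(2*ρ) := by positivity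
    linarith
  calc econj g ν + ((‖ν - V‖^2/(2*ρ) : ℝ) : EReal)
      = ((⟪ν, q⟫ - c + ‖ν - V‖^2/(2*ρ) : ℝ) : EReal) := by rw [hν, ← EReal.coe_add]
    _ ≤ ((⟪μ, q⟫ - c + ‖μ - V‖^2/(2*ρ) : ℝ) : EReal) := EReal.coe_le_coe_iff.2 hreal
    _ = ((⟪μ, q⟫ - c : ℝ) : EReal) + ((‖μ - V‖^2/(2*ρ) : ℝ) : EReal) := EReal.coe_add _ _
    _ ≤ econj g μ + ((‖μ - V‖^2/(2*ρ) : ℝ) : EReal) := add_le_add_left hlow _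

lemma econj_proper {f : E → EReal} (hconv : EConvex f) (hp : EProper f) {γ : ℝ}
    (hγ : 0 < γ) {z p : E} {a : ℝ} (ha : f p = (a : EReal)) (h : IsProx f γ z p) :
    EProper (econj f) := by
  constructor
  · exact ⟨γ⁻¹ • (z - p), by
      rw [econj_at_subgrad hconv hp hγ ha h]
      exact EReal.coe_ne_top _⟩
  · intro μ
    exact ne_of_gt (lt_of_lt_of_le (EReal.bot_lt_coe _) (econj_lower ha μ))

lemma prox_unique_conj {f : E → EReal} (hconv : EConvex f) (hp : EProper f) {γ : ℝ}
    (hγ : 0 < γ) {z p : E} {a : ℝ} (ha : f p = (a : EReal)) (h : IsProx f γ z p)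
    {p' : E} (h' : IsProx (econj f) γ⁻¹ (γ⁻¹ • z) p') : p' = γ⁻¹ • (z - p) := by
  have hρ : 0 < γ⁻¹ := inv_pos.2 hγ
  set ρ := γ⁻¹ with hρdef
  set V := ρ • z with hV
  set ν := ρ • (z - p) with hνdef
  have hνV : ν = V - ρ • p := by rw [hνdef, hV, smul_sub]
  have hν : econj f ν = ((⟪ν, p⟫ - a : ℝ) : EReal) := econj_at_subgrad hconv hp hγ ha h
  obtain ⟨c', hc'⟩ := prox_val_real (econj_proper hconv hp hγ ha h) h'
  have h1 := h' ν
  rw [hc', hν, ← EReal.coe_add, ← EReal.coe_add, EReal.coe_le_coe_iff] at h1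
  have hFY : (⟪p', p⟫ : ℝ) - a ≤ c' := by
    have := econj_lower ha p'
    rw [hc', EReal.coe_le_coe_iff] at this
    exact this
  -- strong convexity identity
  have e1 : ‖ν - V‖^2 = ρ^2 * ‖p‖^2 := by
    rw [hνV]
    have : V - ρ • p - V = -(ρ • p) := by abel
    rw [this, norm_neg, norm_smul]
    simp [mul_pow, sq_abs]
  have e3 : (⟪p' - ν, p⟫ : ℝ) = ⟪p', p⟫ - ⟪ν, p⟫ := inner_sub_left p' ν p
  have e2 : ‖p' - V‖^2 = ‖p' - ν‖^2 - 2*(ρ*⟪p' - ν, p⟫) + ρ^2*‖p‖^2 := by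
    have hμV : p' - V = (p' - ν) - ρ • p := by rw [hνV]; abel
    rw [hμV, norm_sub_sq_real, real_inner_smul_right, norm_smul]
    simp [mul_pow, sq_abs]
  have hident : (⟪p', p⟫ : ℝ) + ‖p' - V‖^2/(2*ρ)
      = ⟪ν, p⟫ + ‖ν - V‖^2/(2*ρ) + ‖p' - ν‖^2/(2*ρ) := by
    rw [e1, e2, e3]
    field_simp
    ring
  have hq : ‖p' - ν‖^2/(2*ρ) ≤ 0 := by linarith
  have hsq : ‖p' - ν‖^2 ≤ 0 := by
    by_contra hb
    push_neg at hb
    exact absurd (div_pos hb (by linarith)) (not_lt.2 hq)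
  have : ‖p' - ν‖ = 0 := by nlinarith [norm_nonneg (p' - ν), sq_nonneg ‖p' - ν‖]
  have := norm_eq_zero.1 this
  have := sub_eq_zero.1 this
  exact this

lemma add_coe_bot_lt {a : EReal} (ha : a ≠ ⊥) (r : ℝ) : ⊥ < a + (r : EReal) := by
  rcases eq_or_ne a ⊤ with h | h
  · rw [h, EReal.top_add_coe]
    exact bot_lt_top
  · have h2 := EReal.coe_toReal h ha
    rw [← h2, ← EReal.coe_add]
    exact EReal.bot_lt_coe _

lemma lsc_add_cont {g : E → EReal} (hlsc : LowerSemicontinuous g) (hbot : ∀ u, g u ≠ ⊥)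
    {φ : E → ℝ} (hφ : Continuous φ) :
    LowerSemicontinuous (fun u => g u + ((φ u : ℝ) : EReal)) := by
  intro u y hy
  induction y with
  | bot =>
    exact Filter.Eventually.of_forall fun u' => add_coe_bot_lt (hbot u') _
  | top => exact absurd hy (not_top_lt)
  | coe r =>
    have hy' : ((r : ℝ) : EReal) < g u + ((φ u : ℝ) : EReal) := hy
    have hkey : ∃ b ε : ℝ, 0 < ε ∧ ((b : ℝ) : EReal) < g u ∧ r < b + φ u - ε := by
      rcases eq_or_ne (g u) ⊤ with htp | htp
      · exact ⟨r - φ u + 1, 1/2, by norm_num, by rw [htp]; exact EReal.coe_lt_top _,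
          by linarith⟩
      · have hd := EReal.coe_toReal htp (hbot u)
        set d := (g u).toReal
        rw [← hd, ← EReal.coe_add] at hy'
        have hrd : r < d + φ u := by exact_mod_cast hy'
        refine ⟨d - (d + φ u - r)/3, (d + φ u - r)/3, by linarith, ?_, by linarith⟩
        rw [← hd]
        exact_mod_cast (by linarith : d - (d + φ u - r)/3 < d)
    obtain ⟨b, ε, hε, hb, hrb⟩ := hkey
    have h1 := hlsc u b hb
    have h2 : ∀ᶠ u' in nhds u, φ u - ε < φ u' :=
      hφ.continuousAt.eventually_mem (Ioi_mem_nhds (by linarith : φ u - ε < φ u))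
    filter_upwards [h1, h2] with u' hu1 hu2'
    have hu2 : φ u - ε < φ u' := hu2'
    have hlt : ((r : ℝ) : EReal) < ((b + φ u' : ℝ) : EReal) :=
      EReal.coe_lt_coe_iff.2 (by linarith)
    calc ((r : ℝ) : EReal) < ((b + φ u' : ℝ) : EReal) := hlt
      _ = ((b : ℝ) : EReal) + ((φ u' : ℝ) : EReal) := EReal.coe_add _ _
      _ ≤ g u' + ((φ u' : ℝ) : EReal) := add_le_add_left hu1.le _

lemma prox_exists {g : E → EReal} (hp : EProper g) (hlsc : LowerSemicontinuous g)
    (hconv : EConvex g) {γ : ℝ} (hγ : 0 < γ) (x : E) : ∃ q, IsProx g γ x q := by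
  classical
  obtain ⟨u₀, hu₀⟩ := hp.1
  obtain ⟨c, hc⟩ : ∃ c : ℝ, g u₀ = (c : EReal) :=
    ⟨(g u₀).toReal, (EReal.coe_toReal hu₀ (hp.2 u₀)).symm⟩
  -- lower bound on ball of radius 2
  obtain ⟨q₂, hq₂K, hq₂min⟩ := lsc_exists_min hlsc (isCompact_closedBall u₀ 2)
    ⟨u₀, Metric.mem_closedBall_self (by norm_num)⟩
  obtain ⟨m, hmval⟩ : ∃ m : ℝ, g q₂ = (m : EReal) := by
    refine ⟨(g q₂).toReal, (EReal.coe_toReal ?_ (hp.2 q₂)).symm⟩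
    intro htp
    have := hq₂min u₀ (Metric.mem_closedBall_self (by norm_num))
    rw [htp, hc, top_le_iff] at this
    exact EReal.coe_ne_top c this
  have hm : ∀ u ∈ Metric.closedBall u₀ 2, (m : EReal) ≤ g u := by
    intro u hu
    rw [← hmval]
    exact hq₂min u hu
  -- global affine lower bound
  obtain ⟨B, hBdef⟩ : ∃ B : ℝ, B = |m| + |c| := ⟨_, rfl⟩
  obtain ⟨A, hAdef⟩ : ∃ A : ℝ, A = -(|m| + |c|) := ⟨_, rfl⟩
  have hB0 : 0 ≤ B := by rw [hBdef]; positivity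
  have hlb : ∀ u : E, ((A - B * ‖u - u₀‖ : ℝ) : EReal) ≤ g u := by
    intro u
    have hr0 : (0:ℝ) ≤ ‖u - u₀‖ := norm_nonneg _
    rcases le_or_gt ‖u - u₀‖ 1 with hr1 | hr1
    · have humem : u ∈ Metric.closedBall u₀ 2 := by
        rw [Metric.mem_closedBall, dist_eq_norm]
        linarith
      refine le_trans (EReal.coe_le_coe_iff.2 ?_) (hm u humem)
      nlinarith [mul_nonneg hB0 hr0, neg_abs_le m, abs_nonneg c, abs_nonneg m]
    · -- convexity argument
      have hrne : ‖u - u₀‖ ≠ 0 := by linarith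
      have hcv := hconv u₀ u (1 - ‖u - u₀‖⁻¹) ‖u - u₀‖⁻¹ (by
          have : ‖u - u₀‖⁻¹ ≤ 1 := by
            rw [inv_le_one_iff₀]
            right; linarith
          linarith) (by positivity) (by ring)
      have hpt : (1 - ‖u - u₀‖⁻¹) • u₀ + ‖u - u₀‖⁻¹ • u = u₀ + ‖u - u₀‖⁻¹ • (u - u₀) := by
        rw [smul_sub, sub_smul, one_smul]
        abel
      rw [hpt, hc] at hcv
      have hdmem : u₀ + ‖u - u₀‖⁻¹ • (u - u₀) ∈ Metric.closedBall u₀ 2 := by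
        rw [Metric.mem_closedBall, dist_eq_norm]
        have h0 : u₀ + ‖u - u₀‖⁻¹ • (u - u₀) - u₀ = ‖u - u₀‖⁻¹ • (u - u₀) := by abel
        rw [h0, norm_smul, norm_inv, Real.norm_eq_abs,
          abs_of_pos (by linarith : (0:ℝ) < ‖u - u₀‖), inv_mul_cancel₀ hrne]
        norm_num
      have hmle := le_trans (hm _ hdmem) hcv
      rcases eq_or_ne (g u) ⊤ with htp | htp
      · rw [htp]; exact le_top
      · obtain ⟨e, he⟩ : ∃ e : ℝ, g u = (e : EReal) :=
          ⟨(g u).toReal, (EReal.coe_toReal htp (hp.2 u)).symm⟩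
        rw [he, ← EReal.coe_mul, ← EReal.coe_mul, ← EReal.coe_add,
          EReal.coe_le_coe_iff] at hmle
        rw [he, EReal.coe_le_coe_iff]
        have h6 := mul_le_mul_of_nonneg_left hmle hr0
        have h7 : ‖u - u₀‖ * ((1 - ‖u - u₀‖⁻¹)*c + ‖u - u₀‖⁻¹*e)
            = ‖u - u₀‖*c - c + e := by
          field_simp
        rw [h7] at h6
        nlinarith [mul_le_mul_of_nonneg_left (neg_abs_le m) hr0,
          mul_le_mul_of_nonneg_left (neg_abs_le c) hr0,
          mul_le_mul_of_nonneg_left (le_abs_self c) hr0,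
          abs_nonneg m, abs_nonneg c, neg_abs_le c, le_abs_self c]
  -- the objective
  set Φ : E → EReal := fun u => g u + ((‖u - x‖^2/(2*γ) : ℝ) : EReal) with hΦdef
  obtain ⟨T, hTdef⟩ : ∃ T : ℝ, T = c + ‖u₀ - x‖^2/(2*γ) := ⟨_, rfl⟩
  have hΦu₀ : Φ u₀ = ((T : ℝ) : EReal) := by
    rw [hΦdef, hTdef]
    simp only
    rw [hc, ← EReal.coe_add]
  obtain ⟨D, hDdef⟩ : ∃ D : ℝ, D = ‖x - u₀‖ := ⟨_, rfl⟩
  obtain ⟨R, hRdef⟩ : ∃ R : ℝ,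
      R = max (max 1 (‖u₀ - x‖ + 1)) (2*γ*(B + |T - A + B*D| + 1)) := ⟨_, rfl⟩
  have hfar : ∀ u : E, R < ‖u - x‖ → ((T : ℝ) : EReal) < Φ u := by
    intro u hu
    rw [hRdef] at hu
    have ht1 : 1 ≤ ‖u - x‖ := le_trans (le_trans (le_max_left _ _) (le_max_left _ _)) hu.le
    have htb : 2*γ*(B + |T - A + B*D| + 1) < ‖u - x‖ := lt_of_le_of_lt (le_max_right _ _) hu
    have htri : ‖u - u₀‖ ≤ ‖u - x‖ + D := by
      rw [hDdef]
      calc ‖u - u₀‖ = dist u u₀ := (dist_eq_norm u u₀).symm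
        _ ≤ dist u x + dist x u₀ := dist_triangle u x u₀
        _ = ‖u - x‖ + ‖x - u₀‖ := by rw [dist_eq_norm, dist_eq_norm]
    have habs : T - A + B*D ≤ |T - A + B*D| := le_abs_self _
    have habs0 : (0:ℝ) ≤ |T - A + B*D| := abs_nonneg _
    have h7 : ‖u - x‖*(B + |T - A + B*D| + 1) < ‖u - x‖^2/(2*γ) := by
      rw [lt_div_iff₀ (by linarith : (0:ℝ) < 2*γ)]
      nlinarith
    have hreal : T < A - B*‖u - u₀‖ + ‖u - x‖^2/(2*γ) := by
      have hBs : B*‖u - u₀‖ ≤ B*(‖u - x‖ + D) := mul_le_mul_of_nonneg_left htri hB0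
      have hint : 1*(|T - A + B*D| + 1) ≤ ‖u - x‖*(|T - A + B*D| + 1) :=
        mul_le_mul_of_nonneg_right ht1 (by positivity)
      nlinarith [hint, h7, hBs, habs]
    calc ((T : ℝ) : EReal) < ((A - B*‖u - u₀‖ + ‖u - x‖^2/(2*γ) : ℝ) : EReal) :=
          EReal.coe_lt_coe_iff.2 hreal
      _ = ((A - B*‖u - u₀‖ : ℝ) : EReal) + ((‖u - x‖^2/(2*γ) : ℝ) : EReal) := EReal.coe_add _ _
      _ ≤ g u + ((‖u - x‖^2/(2*γ) : ℝ) : EReal) := add_le_add_left (hlb u) _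
      _ = Φ u := by rw [hΦdef]
  -- minimize on closed ball
  have hΦlsc : LowerSemicontinuous Φ := by
    exact lsc_add_cont hlsc hp.2 (((continuous_id.sub continuous_const).norm.pow 2).div_const _)
  have hu₀K : u₀ ∈ Metric.closedBall x R := by
    rw [Metric.mem_closedBall, dist_eq_norm, hRdef]
    calc ‖u₀ - x‖ ≤ ‖u₀ - x‖ + 1 := by linarith
      _ ≤ _ := le_trans (le_max_right _ _) (le_max_left _ _)
  obtain ⟨q, hqK, hqmin⟩ := lsc_exists_min hΦlsc (isCompact_closedBall x R) ⟨u₀, hu₀K⟩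
  refine ⟨q, fun y => ?_⟩
  show g q + _ ≤ g y + _
  rcases le_or_gt ‖y - x‖ R with hy | hy
  · have hyK : y ∈ Metric.closedBall x R := by rw [Metric.mem_closedBall, dist_eq_norm]; exact hy
    exact hqmin y hyK
  · calc g q + ((‖q - x‖^2/(2*γ) : ℝ) : EReal) ≤ Φ u₀ := hqmin u₀ hu₀K
      _ = ((T : ℝ) : EReal) := hΦu₀
      _ ≤ g y + ((‖y - x‖^2/(2*γ) : ℝ) : EReal) := (hfar y hy).le

lemma econj_rfun_neg (g : E → EReal) (ρ : ℝ) (w : E) :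
    econj (rfun (fun μ => econj g (-μ)) ρ) w = econj (rfun (econj g) ρ) (-w) := by
  unfold econj rfun
  apply le_antisymm
  · apply iSup_le
    intro μ
    refine le_trans (le_of_eq ?_) (le_iSup (fun ν => ((⟪-w, ν⟫ : ℝ) : EReal) -
      ((ρ : EReal) * (⨆ u, ((⟪ν, u⟫ : ℝ) : EReal) - g u) + ((‖ν‖^2/2 : ℝ) : EReal))) (-μ))
    simp only [inner_neg_neg, norm_neg]
  · apply iSup_le
    intro ν
    refine le_trans (le_of_eq ?_) (le_iSup (fun μ => ((⟪w, μ⟫ : ℝ) : EReal) -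
      ((ρ : EReal) * (⨆ u, ((⟪-μ, u⟫ : ℝ) : EReal) - g u) + ((‖μ‖^2/2 : ℝ) : EReal))) (-ν))
    simp only [inner_neg_neg, norm_neg, neg_neg, inner_neg_left, inner_neg_right]


theorem stmt14 {n : ℕ} (f g : EuclideanSpace ℝ (Fin n) → EReal)
    (hfp : EProper f) (hflsc : LowerSemicontinuous f) (hfc : EConvex f)
    (hgp : EProper g) (hglsc : LowerSemicontinuous g) (hgc : EConvex g)
    (ρ γ : ℝ) (hρ : 0 < ρ) (hγ : γ = ρ⁻¹)
    (v z : EuclideanSpace ℝ (Fin n)) (hz : z = ρ⁻¹ • v)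
    (pfs pf : EuclideanSpace ℝ (Fin n))
    (hpfs : IsProx (econj f) ρ v pfs)
    (hpf : IsProx f γ z pf) :
    (((2*ρ)⁻¹ : ℝ) : EReal) *
        (((⟪(2:ℝ) • pfs - v, v⟫ : ℝ) : EReal) - p2fun (econj f) ρ v -
          p2fun (fun μ => econj g (-μ)) ρ ((2:ℝ) • pfs - v)) =
      -((((2*γ)⁻¹ : ℝ) : EReal) *
        (((⟪(2:ℝ) • pf - z, z⟫ : ℝ) : EReal) - p2fun f γ z -
          p2fun g γ ((2:ℝ) • pf - z))) := by
  subst hγ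
  have hγpos : 0 < ρ⁻¹ := inv_pos.2 hρ
  have hγρ : (ρ⁻¹)⁻¹ = ρ := inv_inv ρ
  have hv : v = ρ • z := by rw [hz, smul_smul, mul_inv_cancel₀ hρ.ne', one_smul]
  obtain ⟨a, ha⟩ := prox_val_real hfp hpf
  set x : EuclideanSpace ℝ (Fin n) := (2:ℝ) • pf - z with hxdef
  obtain ⟨q, hq⟩ := prox_exists hgp hglsc hgc hγpos x
  obtain ⟨b, hb⟩ := prox_val_real hgp hq
  have hSf := econj_rfun_eval hfp.2 hγpos ha hpf
  have hSg := econj_rfun_eval hgp.2 hγpos hb hq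
  have hfstar : econj f (ρ • (z - pf)) = ((⟪ρ • (z - pf), pf⟫ - a : ℝ) : EReal) := by
    have := econj_at_subgrad hfc hfp hγpos ha hpf
    rwa [hγρ] at this
  have hpfs_eq : pfs = ρ • (z - pf) := by
    have h' : IsProx (econj f) (ρ⁻¹)⁻¹ ((ρ⁻¹)⁻¹ • z) pfs := by
      rw [hγρ, ← hv]; exact hpfs
    have := prox_unique_conj hfc hfp hγpos ha hpf h'
    rwa [hγρ] at this
  have hfproper := econj_proper hfc hfp hγpos ha hpf
  have hc' : econj f pfs = ((⟪ρ • (z - pf), pf⟫ - a : ℝ) : EReal) := by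
    rw [hpfs_eq]; exact hfstar
  have hSfs := econj_rfun_eval hfproper.2 hρ hc' hpfs
  have hgprox' : IsProx (econj g) ρ (ρ • x) (ρ • (x - q)) := by
    have := isProx_econj hgc hgp hγpos hb hq
    rwa [hγρ] at this
  have hgstar : econj g (ρ • (x - q)) = ((⟪ρ • (x - q), q⟫ - b : ℝ) : EReal) := by
    have := econj_at_subgrad hgc hgp hγpos hb hq
    rwa [hγρ] at this
  have hgproper := econj_proper hgc hgp hγpos hb hq
  have hSgs := econj_rfun_eval hgproper.2 hρ hgstar hgprox'
  have hw : (2:ℝ) • pfs - v = -(ρ • x) := by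
    rw [hpfs_eq, hv, hxdef]
    module
  have hLg : econj (rfun (fun μ => econj g (-μ)) ρ) ((2:ℝ) • pfs - v)
      = econj (rfun (econj g) ρ) (ρ • x) := by
    rw [econj_rfun_neg, hw, neg_neg]
  simp only [p2fun]
  rw [hSf, hSg, hSfs, hLg, hSgs]
  have h2 : ∀ r s : ℝ, (2:EReal) * (r:EReal) - ((s:ℝ):EReal) = ((2*r - s : ℝ):EReal) :=
    fun r s => by rw [show (2:EReal) = ((2:ℝ):EReal) from rfl, ← EReal.coe_mul, ← EReal.coe_sub]
  rw [h2, h2, h2, h2, ← EReal.coe_sub, ← EReal.coe_sub, ← EReal.coe_sub, ← EReal.coe_sub,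
    ← EReal.coe_mul, ← EReal.coe_mul, ← EReal.coe_neg, EReal.coe_eq_coe_iff]
  rw [hpfs_eq, hv, hxdef]
  have hne : ρ ≠ 0 := hρ.ne'
  simp only [← real_inner_self_eq_norm_sq]
  simp only [inner_sub_left, inner_sub_right, real_inner_smul_left, real_inner_smul_right]
  simp only [real_inner_comm pf z, real_inner_comm q z, real_inner_comm q pf]
  field_simp
  ring
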